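/- Let (Mᵢ)_{i∈ℕ} be independent real random variables with E Mᵢ = 0 and E|Mᵢ|^p < ∞ for some 1 ≤ p ≤ 2. Then for every n, E|∑_{i=1}^n Mᵢ|^p ≤ 2 ∑_{i=1}^n E|Mᵢ|^p. -/

import Mathlib

open MeasureTheory ProbabilityTheory

namespace VBE

/-- subadditivity of `x ^ q` for `0 ≤ q ≤ 1` -/
lemma rpow_subadd {a b q : ℝ} (ha : 0 ≤ a) (hb : 0 ≤ b) (hq0 : 0 ≤ q) (hq1 : q ≤ 1) :
    (a + b) ^ q ≤ a ^ q + b ^ q := by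
  have h := NNReal.rpow_add_le_add_rpow a.toNNReal b.toNNReal hq0 hq1
  have h2 : (((a.toNNReal + b.toNNReal) ^ q : NNReal) : ℝ)
      ≤ ((a.toNNReal ^ q + b.toNNReal ^ q : NNReal) : ℝ) := by exact_mod_cast h
  rw [NNReal.coe_rpow, NNReal.coe_add, NNReal.coe_add, NNReal.coe_rpow, NNReal.coe_rpow,
    Real.coe_toNNReal _ ha, Real.coe_toNNReal _ hb] at h2
  exact h2

lemma mvt_rpow {p : ℝ} (hp : 1 ≤ p) {a b : ℝ} (hab : a < b) :
    ∃ c ∈ Set.Ioo a b, b ^ p - a ^ p = p * c ^ (p - 1) * (b - a) := by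
  obtain ⟨c, hc, hc2⟩ := exists_hasDerivAt_eq_slope (fun x : ℝ => x ^ p)
    (fun x => p * x ^ (p - 1)) hab
    (fun x _ => (Real.hasDerivAt_rpow_const (Or.inr hp)).continuousAt.continuousWithinAt)
    (fun x _ => Real.hasDerivAt_rpow_const (Or.inr hp))
  refine ⟨c, hc, ?_⟩
  rw [hc2, div_mul_cancel₀ _ (sub_ne_zero.2 hab.ne')]

lemma abs_sign_le (x : ℝ) : |Real.sign x| ≤ 1 := by
  rcases Real.sign_apply_eq x with h | h | h <;> rw [h] <;> norm_num

/-- the key pointwise inequality, case `0 ≤ x` -/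
lemma key_nonneg {p : ℝ} (hp : 1 ≤ p) (hp2 : p ≤ 2) {x : ℝ} (hx : 0 ≤ x) (y : ℝ) :
    |x + y| ^ p ≤ |x| ^ p + (p * Real.sign x * |x| ^ (p - 1)) * y + 2 * |y| ^ p := by
  have hp0 : (0:ℝ) < p := lt_of_lt_of_le zero_lt_one hp
  rcases eq_or_lt_of_le hx with hx0 | hx0
  · -- x = 0
    rw [← hx0, Real.sign_zero]
    simp only [zero_add, abs_zero, Real.zero_rpow hp0.ne', mul_zero, zero_mul]
    have : 0 ≤ |y| ^ p := Real.rpow_nonneg (abs_nonneg y) p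
    linarith
  have hsx : Real.sign x = 1 := Real.sign_of_pos hx0
  have hax : |x| = x := abs_of_pos hx0
  rw [hsx, hax, mul_one]
  rcases le_or_gt 0 y with hy | hy
  · -- y ≥ 0
    rcases eq_or_lt_of_le hy with hy0 | hy0
    · rw [← hy0]
      simp only [add_zero, abs_zero, Real.zero_rpow hp0.ne', mul_zero, hax]
      linarith
    have hay : |y| = y := abs_of_pos hy0
    have haxy : |x + y| = x + y := abs_of_pos (by linarith)
    rw [hay, haxy]
    obtain ⟨c, hc, hceq⟩ := mvt_rpow hp (show x < x + y by linarith)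
    have hc0 : 0 < c := lt_trans hx0 hc.1
    have hcle : c ^ (p - 1) ≤ x ^ (p - 1) + y ^ (p - 1) := by
      calc c ^ (p - 1) ≤ (x + y) ^ (p - 1) :=
            Real.rpow_le_rpow hc0.le hc.2.le (by linarith)
        _ ≤ x ^ (p - 1) + y ^ (p - 1) := rpow_subadd hx0.le hy0.le (by linarith) (by linarith)
    have hyy : y ^ (p - 1) * y = y ^ p := by
      rw [Real.rpow_sub hy0, Real.rpow_one, div_mul_cancel₀ _ hy0.ne']
    have hyp : 0 ≤ y ^ p := Real.rpow_nonneg hy0.le p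
    nlinarith [hceq, mul_le_mul_of_nonneg_left hcle hp0.le]
  · -- y < 0
    set t := -y with ht
    have hty : y = -t := by rw [ht]; ring
    have ht0 : 0 < t := by rw [ht]; linarith
    have hat : |y| = t := by rw [hty, abs_neg, abs_of_pos ht0]
    rw [hat, hty]
    have htp : 0 ≤ t ^ p := Real.rpow_nonneg ht0.le p
    have hxp : 0 ≤ x ^ p := Real.rpow_nonneg hx0.le p
    rcases lt_trichotomy t x with htx | htx | htx
    · -- 0 < t < x
      have haxy : |x + -t| = x - t := by rw [abs_of_pos (by linarith)]; ring
      rw [haxy]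
      obtain ⟨c, hc, hceq⟩ := mvt_rpow hp (show x - t < x by linarith)
      have hcx : 0 < c := lt_trans (by linarith) hc.1
      have hxle : x ^ (p - 1) ≤ c ^ (p - 1) + t ^ (p - 1) := by
        calc x ^ (p - 1) = ((x - t) + t) ^ (p - 1) := by ring_nf
          _ ≤ (x - t) ^ (p - 1) + t ^ (p - 1) :=
              rpow_subadd (by linarith) ht0.le (by linarith) (by linarith)
          _ ≤ c ^ (p - 1) + t ^ (p - 1) := by
              have := Real.rpow_le_rpow (by linarith : (0:ℝ) ≤ x - t) hc.1.le
                (by linarith : (0:ℝ) ≤ p - 1)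
              linarith
      have htt : t ^ (p - 1) * t = t ^ p := by
        rw [Real.rpow_sub ht0, Real.rpow_one, div_mul_cancel₀ _ ht0.ne']
      nlinarith [mul_le_mul_of_nonneg_left (mul_le_mul_of_nonneg_right hxle ht0.le) hp0.le]
    · -- t = x
      subst htx
      have haxy : |t + -t| = 0 := by simp
      rw [haxy, Real.zero_rpow hp0.ne']
      have htt : t ^ (p - 1) * t = t ^ p := by
        rw [Real.rpow_sub ht0, Real.rpow_one, div_mul_cancel₀ _ ht0.ne']
      nlinarith
    · -- t > x
      have haxy : |x + -t| = t - x := by rw [abs_of_neg (by linarith)]; ring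
      rw [haxy]
      have h1 : (t - x) ^ p ≤ t ^ p := Real.rpow_le_rpow (by linarith) (by linarith) hp0.le
      -- p * x^(p-1) * t ≤ x ^ p + t ^ p
      have h2 : p * x ^ (p - 1) * t ≤ x ^ p + t ^ p := by
        rcases eq_or_lt_of_le hp with hp1 | hp1
        · -- p = 1
          rw [← hp1]
          simp only [sub_self, Real.rpow_zero, Real.rpow_one, mul_one, one_mul]
          linarith
        · -- 1 < p : Young
          have hconj : (p / (p - 1)).HolderConjugate p :=
            (Real.HolderConjugate.conjExponent hp1).symm
          have hy := Real.young_inequality_of_nonneg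
            (Real.rpow_nonneg hx0.le (p - 1)) ht0.le hconj
          have hxpp : (x ^ (p - 1)) ^ (p / (p - 1)) = x ^ p := by
            rw [← Real.rpow_mul hx0.le]
            congr 1
            rw [mul_comm, div_mul_cancel₀ _ (by linarith : p - 1 ≠ 0)]
          rw [hxpp] at hy
          have hp1' : 0 < p - 1 := by linarith
          have key : x ^ (p - 1) * t ≤ x ^ p * (p - 1) / p + t ^ p / p := by
            have : x ^ p / (p / (p - 1)) = x ^ p * (p - 1) / p := by
              field_simp
            rw [this] at hy
            exact hy
          have := mul_le_mul_of_nonneg_left key hp0.le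
          calc p * x ^ (p - 1) * t = p * (x ^ (p - 1) * t) := by ring
            _ ≤ p * (x ^ p * (p - 1) / p + t ^ p / p) := this
            _ = (p - 1) * x ^ p + t ^ p := by field_simp
            _ ≤ x ^ p + t ^ p := by nlinarith
      nlinarith

/-- the key pointwise inequality -/
lemma key {p : ℝ} (hp : 1 ≤ p) (hp2 : p ≤ 2) (x y : ℝ) :
    |x + y| ^ p ≤ |x| ^ p + (p * Real.sign x * |x| ^ (p - 1)) * y + 2 * |y| ^ p := by
  rcases le_or_gt 0 x with hx | hx
  · exact key_nonneg hp hp2 hx y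
  · have h := key_nonneg hp hp2 (show (0:ℝ) ≤ -x by linarith) (-y)
    rw [show -x + -y = -(x + y) by ring, abs_neg, abs_neg, abs_neg, Real.sign_neg] at h
    calc |x + y| ^ p ≤ |x| ^ p + p * -Real.sign x * |x| ^ (p - 1) * -y + 2 * |y| ^ p := h
      _ = |x| ^ p + (p * Real.sign x * |x| ^ (p - 1)) * y + 2 * |y| ^ p := by ring

lemma rpow_sub_one_le {p : ℝ} (hp : 1 ≤ p) {a : ℝ} (ha : 0 ≤ a) :
    a ^ (p - 1) ≤ 1 + a ^ p := by
  rcases le_or_gt a 1 with h1 | h1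
  · have : a ^ (p - 1) ≤ 1 := Real.rpow_le_one ha h1 (by linarith)
    have := Real.rpow_nonneg ha p
    linarith
  · have : a ^ (p - 1) ≤ a ^ p := Real.rpow_le_rpow_of_exponent_le h1.le (by linarith)
    linarith

lemma self_le_rpow {p : ℝ} (hp : 1 ≤ p) {a : ℝ} (ha : 0 ≤ a) :
    a ≤ 1 + a ^ p := by
  rcases le_or_gt a 1 with h1 | h1
  · have := Real.rpow_nonneg ha p
    linarith
  · have h : a ^ (1:ℝ) ≤ a ^ p := Real.rpow_le_rpow_of_exponent_le h1.le hp
    rw [Real.rpow_one] at h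
    linarith

lemma add_rpow_le {p : ℝ} (hp : 1 ≤ p) (x y : ℝ) :
    |x + y| ^ p ≤ 2 ^ p * (|x| ^ p + |y| ^ p) := by
  have hp0 : (0:ℝ) ≤ p := by linarith
  have h1 : |x + y| ≤ 2 * max |x| |y| := by
    rcases le_total |x| |y| with h | h
    · rw [max_eq_right h]; calc |x + y| ≤ |x| + |y| := abs_add_le x y
        _ ≤ 2 * |y| := by linarith
    · rw [max_eq_left h]; calc |x + y| ≤ |x| + |y| := abs_add_le x y
        _ ≤ 2 * |x| := by linarith
  calc |x + y| ^ p ≤ (2 * max |x| |y|) ^ p :=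
        Real.rpow_le_rpow (abs_nonneg _) h1 hp0
    _ = 2 ^ p * (max |x| |y|) ^ p := Real.mul_rpow (by norm_num) (le_max_iff.2 (Or.inl (abs_nonneg x)))
    _ ≤ 2 ^ p * (|x| ^ p + |y| ^ p) := by
        have h2 : (0:ℝ) ≤ 2 ^ p := Real.rpow_nonneg (by norm_num) p
        have h3 : (max |x| |y|) ^ p ≤ |x| ^ p + |y| ^ p := by
          rcases le_total |x| |y| with h | h
          · rw [max_eq_right h]
            have := Real.rpow_nonneg (abs_nonneg x) p
            linarith
          · rw [max_eq_left h]
            have := Real.rpow_nonneg (abs_nonneg y) p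
            linarith
        exact mul_le_mul_of_nonneg_left h3 h2

lemma measurable_sign : Measurable Real.sign := by
  have : Real.sign = fun r : ℝ => if r < 0 then (-1:ℝ) else if 0 < r then 1 else 0 := by
    funext r; rfl
  rw [this]
  refine Measurable.ite (measurableSet_lt measurable_id measurable_const) measurable_const ?_
  exact Measurable.ite (measurableSet_lt measurable_const measurable_id) measurable_const
    measurable_const

/-- integrability of `|X+Y|^p` -/
lemma integrable_abs_add_rpow {Ω : Type*} [MeasurableSpace Ω] {P : Measure Ω}
    {X Y : Ω → ℝ} (hX : Measurable X) (hY : Measurable Y) {p : ℝ} (hp : 1 ≤ p)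
    (hXp : Integrable (fun ω => |X ω| ^ p) P) (hYp : Integrable (fun ω => |Y ω| ^ p) P) :
    Integrable (fun ω => |X ω + Y ω| ^ p) P := by
  refine Integrable.mono' ((hXp.add hYp).const_mul (2 ^ p)) ?_ (ae_of_all _ fun ω => ?_)
  · exact (((hX.add hY).abs).pow measurable_const).aestronglyMeasurable
  · rw [Real.norm_eq_abs, abs_of_nonneg (Real.rpow_nonneg (abs_nonneg _) p)]
    exact add_rpow_le hp (X ω) (Y ω)

/-- the one-step von Bahr–Esséen inequality -/
lemma step {Ω : Type*} [MeasurableSpace Ω] (P : Measure Ω) [IsProbabilityMeasure P]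
    {X Y : Ω → ℝ} (hX : Measurable X) (hY : Measurable Y) (hind : IndepFun X Y P)
    {p : ℝ} (hp : 1 ≤ p) (hp2 : p ≤ 2)
    (hXp : Integrable (fun ω => |X ω| ^ p) P) (hYp : Integrable (fun ω => |Y ω| ^ p) P)
    (hYmean : ∫ ω, Y ω ∂P = 0) :
    ∫ ω, |X ω + Y ω| ^ p ∂P ≤ ∫ ω, |X ω| ^ p ∂P + 2 * ∫ ω, |Y ω| ^ p ∂P := by
  have hp0 : (0:ℝ) < p := lt_of_lt_of_le zero_lt_one hp
  set φ : ℝ → ℝ := fun x => p * Real.sign x * |x| ^ (p - 1) with hφ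
  have hφmeas : Measurable φ := by
    exact (measurable_const.mul measurable_sign).mul
      ((measurable_id.abs).pow measurable_const)
  -- integrability of φ ∘ X
  have hφX : Integrable (fun ω => φ (X ω)) P := by
    refine Integrable.mono' (((integrable_const (1:ℝ)).add hXp).const_mul p) ?_
      (ae_of_all _ fun ω => ?_)
    · exact (hφmeas.comp hX).aestronglyMeasurable
    · rw [Real.norm_eq_abs, hφ]
      have h1 : |p * Real.sign (X ω) * |X ω| ^ (p - 1)|
          = p * |Real.sign (X ω)| * |X ω| ^ (p - 1) := by
        rw [abs_mul, abs_mul, abs_of_pos hp0,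
          abs_of_nonneg (Real.rpow_nonneg (abs_nonneg _) _)]
      rw [h1]
      have h2 : |Real.sign (X ω)| ≤ 1 := abs_sign_le _
      have h3 : |X ω| ^ (p - 1) ≤ 1 + |X ω| ^ p := rpow_sub_one_le hp (abs_nonneg _)
      have h4 : (0:ℝ) ≤ |X ω| ^ (p - 1) := Real.rpow_nonneg (abs_nonneg _) _
      calc p * |Real.sign (X ω)| * |X ω| ^ (p - 1) ≤ p * 1 * |X ω| ^ (p - 1) := by
            exact mul_le_mul_of_nonneg_right
              (mul_le_mul_of_nonneg_left h2 hp0.le) h4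
        _ = p * |X ω| ^ (p - 1) := by ring
        _ ≤ p * (1 + |X ω| ^ p) := mul_le_mul_of_nonneg_left h3 hp0.le
  -- integrability of Y
  have hYint : Integrable Y P := by
    refine Integrable.mono' ((integrable_const (1:ℝ)).add hYp) hY.aestronglyMeasurable
      (ae_of_all _ fun ω => ?_)
    rw [Real.norm_eq_abs]
    exact self_le_rpow hp (abs_nonneg _)
  -- independence of φ ∘ X and Y
  have hindφ : IndepFun (fun ω => φ (X ω)) Y P := hind.comp hφmeas measurable_id
  have hmul_int : Integrable (fun ω => φ (X ω) * Y ω) P :=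
    hindφ.integrable_mul hφX hYint
  have hmul_zero : ∫ ω, φ (X ω) * Y ω ∂P = 0 := by
    have := hindφ.integral_fun_mul_eq_mul_integral hφX.aestronglyMeasurable hYint.aestronglyMeasurable
    calc ∫ ω, φ (X ω) * Y ω ∂P = (∫ ω, φ (X ω) ∂P) * ∫ ω, Y ω ∂P := this
      _ = 0 := by rw [hYmean, mul_zero]
  have hsum_int : Integrable (fun ω => |X ω + Y ω| ^ p) P :=
    integrable_abs_add_rpow hX hY hp hXp hYp
  have hRHS_int : Integrable (fun ω => |X ω| ^ p + φ (X ω) * Y ω + 2 * |Y ω| ^ p) P :=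
    (hXp.add hmul_int).add (hYp.const_mul 2)
  have hA : Integrable (fun ω => |X ω| ^ p + φ (X ω) * Y ω) P := hXp.add hmul_int
  have hB : Integrable (fun ω => 2 * |Y ω| ^ p) P := hYp.const_mul 2
  calc ∫ ω, |X ω + Y ω| ^ p ∂P
      ≤ ∫ ω, (|X ω| ^ p + φ (X ω) * Y ω + 2 * |Y ω| ^ p) ∂P :=
        integral_mono hsum_int hRHS_int (fun ω => key hp hp2 (X ω) (Y ω))
    _ = ∫ ω, |X ω| ^ p ∂P + ∫ ω, φ (X ω) * Y ω ∂P + 2 * ∫ ω, |Y ω| ^ p ∂P := by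
        rw [integral_add hA hB, integral_add hXp hmul_int, integral_const_mul]
    _ = ∫ ω, |X ω| ^ p ∂P + 2 * ∫ ω, |Y ω| ^ p ∂P := by rw [hmul_zero]; ring

end VBE

theorem stmt_19 {Ω : Type*} [MeasurableSpace Ω] (P : Measure Ω) [IsProbabilityMeasure P]
    (M : ℕ → Ω → ℝ) (hmeas : ∀ i, Measurable (M i))
    (hindep : iIndepFun M P)
    (p : ℝ) (hp : 1 ≤ p) (hp2 : p ≤ 2)
    (hmom : ∀ i, Integrable (fun ω => |M i ω| ^ p) P)
    (hmean : ∀ i, ∫ ω, M i ω ∂P = 0) :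
    ∀ n : ℕ, ∫ ω, |∑ i ∈ Finset.range n, M i ω| ^ p ∂P ≤
      2 * ∑ i ∈ Finset.range n, ∫ ω, |M i ω| ^ p ∂P := by
  have hp0 : (0:ℝ) < p := lt_of_lt_of_le zero_lt_one hp
  suffices H : ∀ n : ℕ, Integrable (fun ω => |∑ i ∈ Finset.range n, M i ω| ^ p) P ∧
      ∫ ω, |∑ i ∈ Finset.range n, M i ω| ^ p ∂P ≤
        2 * ∑ i ∈ Finset.range n, ∫ ω, |M i ω| ^ p ∂P by
    exact fun n => (H n).2
  intro n
  induction n with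
  | zero =>
      simp only [Finset.range_zero, Finset.sum_empty, abs_zero, Real.zero_rpow hp0.ne']
      exact ⟨integrable_const 0, by simp⟩
  | succ n ih =>
      have hSmeas : Measurable (fun ω => ∑ i ∈ Finset.range n, M i ω) :=
        Finset.measurable_sum _ (fun i _ => hmeas i)
      have hind : IndepFun (fun ω => ∑ i ∈ Finset.range n, M i ω) (M n) P := by
        have h := hindep.indepFun_sum_range_succ hmeas n
        have heq : (∑ j ∈ Finset.range n, M j) = fun ω => ∑ i ∈ Finset.range n, M i ω := by
          funext ω
          simp [Finset.sum_apply]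
        rwa [heq] at h
      constructor
      · simp only [Finset.sum_range_succ]
        exact VBE.integrable_abs_add_rpow hSmeas (hmeas n) hp ih.1 (hmom n)
      · simp only [Finset.sum_range_succ]
        have hstep := VBE.step P hSmeas (hmeas n) hind hp hp2 ih.1 (hmom n) (hmean n)
        have := ih.2
        linarith
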